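/- Let U ⊆ ℝ^d be a convex set, and for each k ∈ {0,…,j} let S_k ⊆ X be a set with an associated policy π_k : ℝ^n → ℝ^d such that for all x ∈ S_k we have π_k x ∈ U and, for all w ∈ W, A x + B (π_k x) + w ∈ S_k. Then the convex safe set CS = convexHull ℝ (⋃_{k≤j} S_k) is a robust control invariant set: for every x ∈ CS there exists u ∈ U such that for all w ∈ W, A x + B u + w ∈ CS. -/
import Mathlib


/-- Proposition 1: the convex hull of robustly invariant safe sets is a robust
control invariant set for the linear system `x⁺ = A x + B u + w`. -/
theorem convexSafeSet_robust_control_invariant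
    {n d j : ℕ}
    (A : (Fin n → ℝ) →ₗ[ℝ] (Fin n → ℝ)) (B : (Fin d → ℝ) →ₗ[ℝ] (Fin n → ℝ))
    (W X : Set (Fin n → ℝ)) (U : Set (Fin d → ℝ))
    (hU : Convex ℝ U)
    (S : Fin (j + 1) → Set (Fin n → ℝ))
    (π : Fin (j + 1) → (Fin n → ℝ) → (Fin d → ℝ))
    (hSX : ∀ k, S k ⊆ X)
    (hπU : ∀ k, ∀ x ∈ S k, π k x ∈ U)
    (hInv : ∀ k, ∀ x ∈ S k, ∀ w ∈ W, A x + B (π k x) + w ∈ S k) :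
    ∀ x ∈ convexHull ℝ (⋃ k, S k), ∃ u ∈ U, ∀ w ∈ W,
      A x + B u + w ∈ convexHull ℝ (⋃ k, S k) := by
  intro x hx
  rw [convexHull_eq] at hx
  obtain ⟨ι, t, wt, z, hw0, hw1, hz, hcm⟩ := hx
  -- pick for each i an index k i with z i ∈ S (k i)
  have hk : ∀ i ∈ t, ∃ k, z i ∈ S k := by
    intro i hi
    have := hz i hi
    simpa [Set.mem_iUnion] using this
  choose k hk using hk
  refine ⟨∑ i ∈ t.attach, wt i • π (k i i.2) (z i), ?_, ?_⟩
  · exact hU.sum_mem (fun i _ => hw0 i i.2)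
      (by rw [Finset.sum_attach t fun i => wt i]; exact hw1)
      (fun i _ => hπU _ _ (hk i i.2))
  · intro w hw
    have hx' : x = ∑ i ∈ t.attach, wt i • z i := by
      rw [Finset.sum_attach t fun i => wt i • z i]
      rw [← hcm, Finset.centerMass, hw1, inv_one, one_smul]
    have : A x + B (∑ i ∈ t.attach, wt i • π (k i i.2) (z i)) + w
        = ∑ i ∈ t.attach, wt i • (A (z i) + B (π (k i i.2) (z i)) + w) := by
      rw [hx', map_sum, map_sum]
      simp only [map_smul, smul_add]
      rw [Finset.sum_add_distrib, Finset.sum_add_distrib]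
      congr 1
      rw [← Finset.sum_smul, Finset.sum_attach t fun i => wt i, hw1, one_smul]
    rw [this]
    exact (convex_convexHull ℝ _).sum_mem (fun i _ => hw0 i i.2)
      (by rw [Finset.sum_attach t fun i => wt i]; exact hw1)
      (fun i _ => subset_convexHull ℝ _ (Set.mem_iUnion.mpr ⟨k i i.2, hInv _ _ (hk i i.2) w hw⟩))
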